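/- Under the setup of the factorized forward marginals and single-coordinate-change proposal kernel: let q(x | x_0) = ∏_d q^d(x^d | x_0^d) with each q^d(· | x_0^d) strictly positive, S(z | x) = (1 − δ_{z,x}) Σ_d S^d(z^d | x^d) δ_{z^{∖d}, x^{∖d}} with S^d > 0, normalizer 𝒮(x) = Σ_z S(z | x) > 0, and M(z | x_0) = Σ_d Σ_{w ≠ z^d} (q^d(w | x_0^d)/q^d(z^d | x_0^d)) S^d(z^d | w)/𝒮(w ∘ z^{∖d}). Then for any function H : 𝒳 → ℝ, Σ_{x ∈ 𝒳} q(x | x_0) Σ_{z ∈ 𝒳} (S(z | x)/𝒮(x)) · (1/M(z | x_0)) · H(z) = Σ_{z ∈ 𝒳} q(z | x_0) H(z). In particular, the two-sample continuous-time VLB loss term E_{x∼q(·|x_0), z∼S(·|x)/𝒮(x)}[ (1/M(z|x_0)) Σ_d (Σ_w q^d(w|x_0^d) r^d(z^d|w) log g^d(w | z)) / q^d(z^d|x_0^d) ] equals the single-pass term E_{x∼q(·|x_0)}[ Σ_d (Σ_w q^d(w|x_0^d) r^d(x^d|w) log g^d(w | x)) / q^d(x^d|x_0^d) ] for any functions r^d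 and g^d for which the logarithms are defined. -/

import Mathlib

/-- Unnormalized single-coordinate-change proposal kernel
`S(z|x) = (1 − δ_{z,x}) Σ_d S^d(z^d|x^d) δ_{z^{∖d},x^{∖d}}`. -/
def Sker {D : ℕ} {X : Fin D → Type*} [∀ d, Fintype (X d)] [∀ d, DecidableEq (X d)]
    (Sd : ∀ d, X d → X d → ℝ) (z x : ∀ d, X d) : ℝ :=
  (if z = x then 0 else 1)
    * ∑ d, Sd d (z d) (x d) * (if ∀ e, e ≠ d → z e = x e then (1 : ℝ) else 0)

section aux
variable {D : ℕ} {X : Fin D → Type*} [∀ d, Fintype (X d)] [∀ d, DecidableEq (X d)]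

open Finset

/-- Sum over the second argument of `Sker`. -/
lemma sker_sum_right (Sd : ∀ d, X d → X d → ℝ) (F : (∀ d, X d) → ℝ) (z : ∀ d, X d) :
    ∑ x, F x * Sker Sd z x
      = ∑ d, ∑ w ∈ Finset.univ.erase (z d),
          F (Function.update z d w) * Sd d (z d) w := by
  have h1 : ∀ x, F x * Sker Sd z x
      = ∑ d, F x * ((if z = x then (0:ℝ) else 1)
          * (Sd d (z d) (x d) * (if ∀ e, e ≠ d → z e = x e then (1:ℝ) else 0))) := by
    intro x
    simp only [Sker, Finset.mul_sum]
  simp only [h1]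
  rw [Finset.sum_comm]
  refine Finset.sum_congr rfl fun d _ => ?_
  set g : (∀ e, X e) → ℝ := fun x => F x * ((if z = x then (0:ℝ) else 1)
      * (Sd d (z d) (x d) * (if ∀ e, e ≠ d → z e = x e then (1:ℝ) else 0))) with hg
  set s : Finset (∀ e, X e) := (Finset.univ.erase (z d)).image (Function.update z d) with hs
  have hzero : ∀ x ∈ (Finset.univ : Finset (∀ e, X e)), x ∉ s → g x = 0 := by
    intro x _ hx
    by_cases hzx : z = x
    · simp [hg, hzx]
    by_cases hind : ∀ e, e ≠ d → z e = x e
    · exfalso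
      apply hx
      rw [hs, Finset.mem_image]
      refine ⟨x d, ?_, ?_⟩
      · rw [Finset.mem_erase]
        refine ⟨?_, Finset.mem_univ _⟩
        intro hxd
        apply hzx
        funext e
        by_cases he : e = d
        · subst he; exact hxd.symm
        · exact hind e he
      · funext e
        by_cases he : e = d
        · subst he; simp
        · rw [Function.update_of_ne he]; exact hind e he
    · simp [hg, hind]
  rw [← Finset.sum_subset (Finset.subset_univ s) hzero, hs,
    Finset.sum_image (by
      intro a _ b _ hab
      have := congrFun hab d
      simpa using this)]
  refine Finset.sum_congr rfl fun w hw => ?_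
  have hw' : w ≠ z d := Finset.ne_of_mem_erase hw
  have hne : z ≠ Function.update z d w := by
    intro h
    apply hw'
    have := congrFun h d
    simpa using this.symm
  have hind : (if ∀ e, e ≠ d → z e = Function.update z d w e then (1:ℝ) else 0) = 1 :=
    if_pos fun e he => (Function.update_of_ne he w z).symm
  rw [hg]
  simp only [if_neg hne, Function.update_self, hind]
  ring

/-- Sum over the first argument of `Sker`. -/
lemma sker_sum_left (Sd : ∀ d, X d → X d → ℝ) (F : (∀ d, X d) → ℝ) (x : ∀ d, X d) :
    ∑ z, F z * Sker Sd z x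
      = ∑ d, ∑ w ∈ Finset.univ.erase (x d),
          F (Function.update x d w) * Sd d w (x d) := by
  have h1 : ∀ z, F z * Sker Sd z x
      = ∑ d, F z * ((if z = x then (0:ℝ) else 1)
          * (Sd d (z d) (x d) * (if ∀ e, e ≠ d → z e = x e then (1:ℝ) else 0))) := by
    intro z
    simp only [Sker, Finset.mul_sum]
  simp only [h1]
  rw [Finset.sum_comm]
  refine Finset.sum_congr rfl fun d _ => ?_
  set g : (∀ e, X e) → ℝ := fun z => F z * ((if z = x then (0:ℝ) else 1)
      * (Sd d (z d) (x d) * (if ∀ e, e ≠ d → z e = x e then (1:ℝ) else 0))) with hg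
  set s : Finset (∀ e, X e) := (Finset.univ.erase (x d)).image (Function.update x d) with hs
  have hzero : ∀ z ∈ (Finset.univ : Finset (∀ e, X e)), z ∉ s → g z = 0 := by
    intro z _ hz
    by_cases hzx : z = x
    · simp [hg, hzx]
    by_cases hind : ∀ e, e ≠ d → z e = x e
    · exfalso
      apply hz
      rw [hs, Finset.mem_image]
      refine ⟨z d, ?_, ?_⟩
      · rw [Finset.mem_erase]
        refine ⟨?_, Finset.mem_univ _⟩
        intro hzd
        apply hzx
        funext e
        by_cases he : e = d
        · subst he; exact hzd
        · exact hind e he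
      · funext e
        by_cases he : e = d
        · subst he; simp
        · rw [Function.update_of_ne he]; exact (hind e he).symm
    · simp [hg, hind]
  rw [← Finset.sum_subset (Finset.subset_univ s) hzero, hs,
    Finset.sum_image (by
      intro a _ b _ hab
      have := congrFun hab d
      simpa using this)]
  refine Finset.sum_congr rfl fun w hw => ?_
  have hw' : w ≠ x d := Finset.ne_of_mem_erase hw
  have hne : Function.update x d w ≠ x := by
    intro h
    apply hw'
    have := congrFun h d
    simpa using this
  have hind : (if ∀ e, e ≠ d → Function.update x d w e = x e then (1:ℝ) else 0) = 1 :=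
    if_pos fun e he => Function.update_of_ne he w x
  rw [hg]
  simp only [if_neg hne, Function.update_self, hind]
  ring

lemma snorm_eq (Sd : ∀ d, X d → X d → ℝ) (x : ∀ d, X d) :
    ∑ z, Sker Sd z x = ∑ d, ∑ w ∈ Finset.univ.erase (x d), Sd d w (x d) := by
  simpa using sker_sum_left Sd (fun _ => 1) x

end aux

/-- Normalization scalar
`M(z|x_0) = Σ_d Σ_{w ≠ z^d} (q^d(w|x_0^d)/q^d(z^d|x_0^d)) S^d(z^d|w)/𝒮(w ∘ z^{∖d})`. -/
noncomputable def Mnorm {D : ℕ} {X : Fin D → Type*}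
    [∀ d, Fintype (X d)] [∀ d, DecidableEq (X d)]
    (qd : ∀ d, X d → ℝ) (Sd : ∀ d, X d → X d → ℝ) (z : ∀ d, X d) : ℝ :=
  ∑ d, ∑ w ∈ Finset.univ.erase (z d),
    (qd d w / qd d (z d)) * Sd d (z d) w
      / ∑ z', Sker Sd z' (Function.update z d w)

/-- Proposition 6: importance reweighting by `1/M(z|x_0)` turns the two-sample
expectation `E_{x∼q(·|x_0), z∼S(·|x)/𝒮(x)}` into the single-sample expectation
`E_{z∼q(·|x_0)}`; in particular the two-sample continuous-time VLB loss term
equals the single-pass term. -/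
theorem single_pass_vlb
    {D : ℕ} (hD : 1 ≤ D) {X : Fin D → Type*}
    [∀ d, Fintype (X d)] [∀ d, DecidableEq (X d)]
    (qd : ∀ d, X d → ℝ)  -- `qd d v = q^d(v | x_0^d)`
    (hqd_pos : ∀ d v, 0 < qd d v) (hqd_sum : ∀ d, ∑ v, qd d v = 1)
    (Sd : ∀ d, X d → X d → ℝ)  -- `Sd d b a = S^d(b | a)`
    (hSd_pos : ∀ d b a, 0 < Sd d b a)
    (hSnorm_pos : ∀ x : ∀ d, X d, 0 < ∑ z, Sker Sd z x) :
    (∀ H : (∀ d, X d) → ℝ,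
      (∑ x, (∏ d, qd d (x d))
          * ∑ z, (Sker Sd z x / ∑ z', Sker Sd z' x) * (1 / Mnorm qd Sd z) * H z)
        = ∑ z, (∏ d, qd d (z d)) * H z)
    ∧ ∀ (rd : ∀ d, X d → X d → ℝ) (gd : ∀ d, X d → (∀ e, X e) → ℝ),
      (∑ x, (∏ d, qd d (x d))
          * ∑ z, (Sker Sd z x / ∑ z', Sker Sd z' x) * (1 / Mnorm qd Sd z)
              * ∑ d, (∑ w, qd d w * rd d (z d) w * Real.log (gd d w z)) / qd d (z d))
        = ∑ x, (∏ d, qd d (x d))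
            * ∑ d, (∑ w, qd d w * rd d (x d) w * Real.log (gd d w x)) / qd d (x d) := by
  classical
  set q : (∀ d, X d) → ℝ := fun x => ∏ d, qd d (x d) with hqdef
  have hq_pos : ∀ x, 0 < q x := fun x => Finset.prod_pos fun d _ => hqd_pos d (x d)
  -- positivity of Mnorm
  have hM : ∀ z, 0 < Mnorm qd Sd z := by
    intro z
    have hS' : 0 < ∑ d, ∑ w ∈ Finset.univ.erase (z d), Sd d w (z d) := by
      rw [← snorm_eq]; exact hSnorm_pos z
    have hex : ∃ d, (Finset.univ.erase (z d)).Nonempty := by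
      by_contra h
      push_neg at h
      simp [h] at hS'
    obtain ⟨d0, hd0⟩ := hex
    have hterm : ∀ (d : Fin D) (w : X d), w ∈ Finset.univ.erase (z d) →
        0 < (qd d w / qd d (z d)) * Sd d (z d) w
          / ∑ z', Sker Sd z' (Function.update z d w) := by
      intro d w _
      exact div_pos (mul_pos (div_pos (hqd_pos d w) (hqd_pos d (z d))) (hSd_pos d (z d) w))
        (hSnorm_pos _)
    refine Finset.sum_pos' (fun d _ => Finset.sum_nonneg fun w hw => (hterm d w hw).le)
      ⟨d0, Finset.mem_univ _, Finset.sum_pos (fun w hw => hterm d0 w hw) hd0⟩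
  -- product update identity
  have hupdate : ∀ (z : ∀ d, X d) (d : Fin D) (w : X d),
      q (Function.update z d w) = qd d w / qd d (z d) * q z := by
    intro z d w
    have h1 : q (Function.update z d w)
        = qd d w * ∏ e ∈ Finset.univ.erase d, qd e (z e) := by
      show (∏ e, qd e (Function.update z d w e)) = _
      rw [← Finset.mul_prod_erase Finset.univ _ (Finset.mem_univ d), Function.update_self]
      congr 1
      refine Finset.prod_congr rfl fun e he => ?_
      rw [Function.update_of_ne (Finset.ne_of_mem_erase he)]
    have h2 : q z = qd d (z d) * ∏ e ∈ Finset.univ.erase d, qd e (z e) :=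
      (Finset.mul_prod_erase Finset.univ _ (Finset.mem_univ d)).symm
    rw [h1, h2]
    field_simp [(hqd_pos d (z d)).ne']
  -- the key marginal identity
  have key : ∀ z : ∀ d, X d,
      (∑ x, (q x / ∑ z', Sker Sd z' x) * Sker Sd z x) = q z * Mnorm qd Sd z := by
    intro z
    rw [sker_sum_right, Mnorm, Finset.mul_sum]
    refine Finset.sum_congr rfl fun d _ => ?_
    rw [Finset.mul_sum]
    refine Finset.sum_congr rfl fun w hw => ?_
    rw [hupdate z d w]
    ring
  have part1 : ∀ H : (∀ d, X d) → ℝ,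
      (∑ x, q x * ∑ z, (Sker Sd z x / ∑ z', Sker Sd z' x) * (1 / Mnorm qd Sd z) * H z)
        = ∑ z, q z * H z := by
    intro H
    have step1 : (∑ x, q x * ∑ z, (Sker Sd z x / ∑ z', Sker Sd z' x)
          * (1 / Mnorm qd Sd z) * H z)
        = ∑ z, (1 / Mnorm qd Sd z * H z) * ∑ x, (q x / ∑ z', Sker Sd z' x) * Sker Sd z x := by
      simp_rw [Finset.mul_sum]
      rw [Finset.sum_comm]
      refine Finset.sum_congr rfl fun z _ => Finset.sum_congr rfl fun x _ => by ring
    rw [step1]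
    refine Finset.sum_congr rfl fun z _ => ?_
    rw [key z]
    field_simp [(hM z).ne']
  exact ⟨part1, fun rd gd => part1 _⟩
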